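/- If g(f·e^{X + Y + b − (a+b)/2} − K) is integrable, then g(f·e^{X + Y − (a+b)/2} − K)·e^{Y − b/2} is integrable and E[g(f·e^{X + Y − (a+b)/2} − K)·e^{Y − b/2}] = E[g(f·e^{X + Y + b − (a+b)/2} − K)]. (With a = ∫_0^{t_i} σ_s² ds and b = ∫_{t_i}^{T} σ_s² ds, this is the change-of-measure identity E[g(F_T − K)·M_T/M_{t_i}] = E[g(F_T·e^{∫_{t_i}^{T} σ_s² ds} − K)].) -/

import Mathlib

open MeasureTheory ProbabilityTheory Real
open scoped ENNReal NNReal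

lemma tilt_gaussian (b : ℝ) (hb : 0 ≤ b) :
    (gaussianReal 0 b.toNNReal).withDensity
        (fun y => ENNReal.ofReal (Real.exp (y - b / 2)))
      = gaussianReal b b.toNNReal := by
  rcases eq_or_lt_of_le hb with hb0 | hb0
  · subst hb0
    simp only [Real.toNNReal_zero, gaussianReal_zero_var]
    ext s hs
    classical
    rw [withDensity_apply _ hs,
      setLIntegral_dirac' (f := fun y => ENNReal.ofReal (Real.exp (y - 0 / 2)))
        (by fun_prop) hs]
    by_cases h0 : (0 : ℝ) ∈ s <;> simp [Measure.dirac_apply' _ hs, Set.indicator, h0]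
  · have hv : b.toNNReal ≠ 0 := by
      simp [Real.toNNReal_eq_zero, not_le, hb0]
    have hbr : ((b.toNNReal : ℝ)) = b := Real.coe_toNNReal b hb
    rw [gaussianReal_of_var_ne_zero 0 hv, gaussianReal_of_var_ne_zero b hv,
      ← withDensity_mul _ (measurable_gaussianPDF 0 b.toNNReal)
        (by fun_prop)]
    congr 1
    funext y
    simp only [gaussianPDF, Pi.mul_apply]
    rw [← ENNReal.ofReal_mul (gaussianPDFReal_nonneg _ _ _)]
    congr 1
    simp only [gaussianPDFReal, hbr, sub_zero]
    rw [mul_assoc, ← Real.exp_add]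
    congr 2
    field_simp
    ring

theorem statement4 {Ω : Type*} [MeasurableSpace Ω] (P : Measure Ω) [IsProbabilityMeasure P]
    (a b : ℝ) (ha : 0 ≤ a) (hb : 0 ≤ b)
    (X Y : Ω → ℝ) (hX : Measurable X) (hY : Measurable Y)
    (hindep : IndepFun X Y P)
    (hXlaw : Measure.map X P = gaussianReal 0 a.toNNReal)
    (hYlaw : Measure.map Y P = gaussianReal 0 b.toNNReal)
    (g : ℝ → ℝ) (hg : Measurable g) (f K : ℝ)
    (hInt : Integrable (fun ω => g (f * Real.exp (X ω + Y ω + b - (a + b) / 2) - K)) P) :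
    Integrable
        (fun ω => g (f * Real.exp (X ω + Y ω - (a + b) / 2) - K) * Real.exp (Y ω - b / 2)) P ∧
      ∫ ω, g (f * Real.exp (X ω + Y ω - (a + b) / 2) - K) * Real.exp (Y ω - b / 2) ∂P
        = ∫ ω, g (f * Real.exp (X ω + Y ω + b - (a + b) / 2) - K) ∂P := by
  set γa := gaussianReal 0 a.toNNReal with hγa
  set γb := gaussianReal 0 b.toNNReal with hγb
  -- joint law
  have hXY : Measure.map (fun ω => (X ω, Y ω)) P = γa.prod γb := by
    rw [(indepFun_iff_map_prod_eq_prod_map_map hX.aemeasurable hY.aemeasurable).mp hindep,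
      hXlaw, hYlaw]
  have hXYm : Measurable (fun ω => (X ω, Y ω)) := hX.prodMk hY
  set G : ℝ × ℝ → ℝ := fun p => g (f * Real.exp (p.1 + p.2 - (a + b) / 2) - K) with hG
  set H : ℝ × ℝ → ℝ := fun p => g (f * Real.exp (p.1 + p.2 + b - (a + b) / 2) - K) with hH
  have hGm : Measurable G := by
    apply hg.comp; fun_prop
  have hHm : Measurable H := by
    apply hg.comp; fun_prop
  set w : ℝ × ℝ → ℝ≥0∞ := fun p => ENNReal.ofReal (Real.exp (p.2 - b / 2)) with hw
  have hwm : Measurable w := by fun_prop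
  set T : ℝ × ℝ → ℝ × ℝ := Prod.map id (· + b) with hT
  have hTm : Measurable T := measurable_id.prodMap (measurable_id.add_const b)
  have hGT : ∀ p, G (T p) = H p := by
    intro p
    simp only [hG, hH, hT, Prod.map, id]
    ring_nf
  -- product tilt
  have hM : (γa.prod γb).withDensity w = γa.prod (gaussianReal b b.toNNReal) := by
    refine (Measure.prod_eq fun s t hs ht => ?_).symm
    rw [withDensity_apply _ (hs.prod ht), ← Measure.prod_restrict,
      lintegral_prod _ (by fun_prop)]
    have hinner : ∀ x : ℝ, ∫⁻ y, w (x, y) ∂(γb.restrict t)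
        = gaussianReal b b.toNNReal t := by
      intro x
      rw [show (fun y => w (x, y)) = fun y => ENNReal.ofReal (Real.exp (y - b / 2)) from rfl,
        ← withDensity_apply _ ht, tilt_gaussian b hb]
    simp only [hinner]
    rw [lintegral_const, Measure.restrict_apply_univ, mul_comm]
  -- product shift
  have hMap : Measure.map T (γa.prod γb) = γa.prod (gaussianReal b b.toNNReal) := by
    have h := Measure.map_prod_map (f := (id : ℝ → ℝ)) (g := (· + b)) γa γb
      measurable_id (measurable_id.add_const b)
    rw [Measure.map_id, hγb, gaussianReal_map_add_const b, zero_add] at h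
    exact h.symm
  -- integrability of H w.r.t. product
  have hIntH : Integrable H (γa.prod γb) := by
    rw [← hXY, integrable_map_measure hHm.aestronglyMeasurable hXYm.aemeasurable]
    exact hInt
  -- integrability of G w.r.t. tilted measure
  have hIntG : Integrable G ((γa.prod γb).withDensity w) := by
    rw [hM, ← hMap, integrable_map_measure hGm.aestronglyMeasurable hTm.aemeasurable]
    exact hIntH.congr (Filter.Eventually.of_forall fun p => (hGT p).symm)
  -- integrability of the product function
  have hIntF : Integrable (fun p => G p * Real.exp (p.2 - b / 2)) (γa.prod γb) := by
    have := (integrable_withDensity_iff hwm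
      (Filter.Eventually.of_forall fun p => ENNReal.ofReal_lt_top)).mp hIntG
    refine this.congr (Filter.Eventually.of_forall fun p => ?_)
    simp only [hw]
    rw [ENNReal.toReal_ofReal (Real.exp_nonneg _)]
  have hFm : Measurable (fun p : ℝ × ℝ => G p * Real.exp (p.2 - b / 2)) :=
    hGm.mul (by fun_prop)
  have hIntF' : Integrable
      (fun ω => g (f * Real.exp (X ω + Y ω - (a + b) / 2) - K) * Real.exp (Y ω - b / 2)) P := by
    have h := hIntF
    rw [← hXY] at h
    exact (integrable_map_measure hFm.aestronglyMeasurable hXYm.aemeasurable).mp h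
  refine ⟨hIntF', ?_⟩
  -- integrals
  have h1 : ∫ ω, g (f * Real.exp (X ω + Y ω - (a + b) / 2) - K) * Real.exp (Y ω - b / 2) ∂P
      = ∫ p, G p * Real.exp (p.2 - b / 2) ∂(γa.prod γb) := by
    rw [← hXY, integral_map hXYm.aemeasurable hFm.aestronglyMeasurable]
  have h2 : ∫ p, G p * Real.exp (p.2 - b / 2) ∂(γa.prod γb)
      = ∫ p, G p ∂((γa.prod γb).withDensity w) := by
    have hwnn : Measurable (fun p : ℝ × ℝ => Real.toNNReal (Real.exp (p.2 - b / 2))) := by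
      fun_prop
    have : (γa.prod γb).withDensity w
        = (γa.prod γb).withDensity
          (fun p => ((Real.toNNReal (Real.exp (p.2 - b / 2)) : ℝ≥0) : ℝ≥0∞)) := by
      congr 1
    rw [this, integral_withDensity_eq_integral_smul hwnn G]
    congr 1
    funext p
    rw [NNReal.smul_def, Real.coe_toNNReal _ (Real.exp_nonneg _), smul_eq_mul, mul_comm]
  have h3 : ∫ p, G p ∂((γa.prod γb).withDensity w)
      = ∫ p, H p ∂(γa.prod γb) := by
    rw [hM, ← hMap, integral_map hTm.aemeasurable hGm.aestronglyMeasurable]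
    exact integral_congr_ae (Filter.Eventually.of_forall fun p => hGT p)
  have h4 : ∫ p, H p ∂(γa.prod γb)
      = ∫ ω, g (f * Real.exp (X ω + Y ω + b - (a + b) / 2) - K) ∂P := by
    rw [← hXY, integral_map hXYm.aemeasurable hHm.aestronglyMeasurable]
  rw [h1, h2, h3, h4]
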